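/- The Catalan triangle numbers C(n,k) (defined by C(0,0)=1, C(n,k)=0 for k>n or n<0, C(n,0)=C(n-1,0), C(n,k)=C(n,k-1)+C(n-1,k) for 0<k<n, C(n,n)=C(n,n-1)) satisfy the recursive relation C(n,k) = sum_{l=0}^{k} C(l,l) * C(n-l-1, k-l) for all k < n. -/

import Mathlib

/-- The Catalan triangle numbers: C(0,0)=1, C(n,k)=0 for k>n,
C(n,0)=C(n-1,0), C(n,k)=C(n,k-1)+C(n-1,k) for 0<k<n, C(n,n)=C(n,n-1). -/
def ctri : ℕ → ℕ → ℕ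
  | 0, 0 => 1
  | 0, _ + 1 => 0
  | n + 1, 0 => ctri n 0
  | n + 1, k + 1 =>
    if n + 1 < k + 1 then 0
    else if k + 1 = n + 1 then ctri (n + 1) k
    else ctri (n + 1) k + ctri n (k + 1)

lemma ctri_zero : ∀ n, ctri n 0 = 1
  | 0 => by simp [ctri]
  | n + 1 => by rw [ctri]; exact ctri_zero n

lemma ctri_of_lt : ∀ n k, n < k → ctri n k = 0
  | 0, _ + 1, _ => by simp [ctri]
  | n + 1, k + 1, h => by rw [ctri]; simp [h]

lemma ctri_succ_succ (n k : ℕ) (h : k ≤ n) :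
    ctri (n + 1) (k + 1) = ctri (n + 1) k + ctri n (k + 1) := by
  rw [ctri]
  rcases eq_or_lt_of_le h with rfl | h'
  · simp [ctri_of_lt _ _ (Nat.lt_succ_self _)]
  · have h1 : ¬ (n + 1 < k + 1) := by omega
    have h2 : k + 1 ≠ n + 1 := by omega
    simp [h1, h2, h'.ne]

lemma ctri_rec' : ∀ n, ∀ k ≤ n,
    ctri n k = ∑ l ∈ Finset.range (k + 1), ctri l l * ctri (n - l - 1) (k - l) := by
  intro n
  induction n with
  | zero =>
    intro k hk
    interval_cases k
    simp [ctri]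
  | succ m ih =>
    intro k hk
    induction k with
    | zero => simp [ctri_zero]
    | succ k ihk =>
      rcases eq_or_lt_of_le hk with heq | hlt
      · -- diagonal case k+1 = m+1
        obtain rfl : k = m := by omega
        rw [Finset.sum_range_succ]
        have hz : ∀ l ∈ Finset.range (k + 1),
            ctri l l * ctri (k + 1 - l - 1) (k + 1 - l) = 0 := by
          intro l hl
          simp only [Finset.mem_range] at hl
          have : k + 1 - l - 1 < k + 1 - l := by omega
          rw [ctri_of_lt _ _ this, mul_zero]
        rw [Finset.sum_eq_zero hz]
        simp [ctri_zero]
      · -- k + 1 < m + 1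
        have hkm : k + 1 ≤ m := by omega
        rw [ctri_succ_succ m k (by omega), ihk (by omega), ih (k + 1) hkm]
        rw [Finset.sum_range_succ (n := k + 1), Finset.sum_range_succ (n := k + 1)]
        have ht : ctri (m - (k + 1) - 1) (k + 1 - (k + 1))
            = ctri (m + 1 - (k + 1) - 1) (k + 1 - (k + 1)) := by
          simp [Nat.sub_self, ctri_zero]
        rw [ht, ← add_assoc]
        congr 1
        rw [← Finset.sum_add_distrib]
        apply Finset.sum_congr rfl
        intro l hl
        simp only [Finset.mem_range] at hl
        have h1 : m + 1 - l - 1 = (m - l - 1) + 1 := by omega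
        have h2 : k + 1 - l = (k - l) + 1 := by omega
        rw [← mul_add, h1, h2, ctri_succ_succ (m - l - 1) (k - l) (by omega)]

/-- The Catalan triangle numbers satisfy
C(n,k) = ∑_{l=0}^{k} C(l,l) * C(n-l-1, k-l) for all k < n. -/
theorem ctri_recursion (n k : ℕ) (hk : k < n) :
    ctri n k = ∑ l ∈ Finset.range (k + 1), ctri l l * ctri (n - l - 1) (k - l) := by
  exact ctri_rec' n k hk.le
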